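/- arXiv:1610.09809 — 2 statements merged into one kernel-verified Lean document; each statement's English description precedes it below -/
import Mathlib

section
/- Let Γ be a totally ordered abelian group, Γ' ⊆ Γ a convex subgroup with quotient Γ'' = Γ/Γ' (with quotient order), and k a field. Then the localization k[[Γ]]_{p_{Γ'}} of the generalized power series ring at the prime ideal p_{Γ'} corresponding to Γ' is a valuation ring of k((Γ)) whose value group is isomorphic to Γ''; concretely, it consists of all Laurent series whose minimal support element lies in Γ_{≥0} ∪ Γ'. -/
section Aux

variable {k : Type*} [Field k] {Γ : Type*} [AddCommGroup Γ] [LinearOrder Γ] [IsOrderedAddMonoid Γ]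

/-- order of the inverse of a unit of a Hahn series field. -/
lemma hahn_order_inv_unit (u : (HahnSeries Γ k)ˣ) :
    ((u⁻¹ : (HahnSeries Γ k)ˣ) : HahnSeries Γ k).order = -(u : HahnSeries Γ k).order := by
  have h1 : (u : HahnSeries Γ k) * ((u⁻¹ : (HahnSeries Γ k)ˣ) : HahnSeries Γ k) = 1 := by
    rw [← Units.val_mul, mul_inv_cancel, Units.val_one]
  have h2 := HahnSeries.order_mul (R := k) u.ne_zero (u⁻¹ : (HahnSeries Γ k)ˣ).ne_zero
  rw [h1, HahnSeries.order_one] at h2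
  exact eq_neg_of_add_eq_zero_right h2.symm

lemma mem_unitGroup_iff' {K : Type*} [Field K] (V : ValuationSubring K) (u : Kˣ) :
    u ∈ V.unitGroup ↔ (u : K) ∈ V ∧ ((u⁻¹ : Kˣ) : K) ∈ V := by
  rw [ValuationSubring.mem_unitGroup_iff]
  constructor
  · intro h
    refine ⟨V.mem_of_valuation_le_one _ h.le, V.mem_of_valuation_le_one _ ?_⟩
    rw [Units.val_inv_eq_inv_val, map_inv₀, h, inv_one]
  · rintro ⟨h1, h2⟩
    rw [← V.valuation_le_one_iff] at h1 h2
    have hmul : V.valuation u * V.valuation ((u⁻¹ : Kˣ) : K) = 1 := by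
      rw [← map_mul, ← Units.val_mul, mul_inv_cancel, Units.val_one, map_one]
    have h3 : (1 : V.ValueGroup) ≤ V.valuation u := by
      calc (1 : V.ValueGroup) = V.valuation u * V.valuation ((u⁻¹ : Kˣ) : K) := hmul.symm
        _ ≤ V.valuation u * 1 := mul_le_mul_right h2 _
        _ = V.valuation u := mul_one _
    exact le_antisymm h1 h3

end Aux

/-- Let `Γ` be a totally ordered abelian group, `Γ'` a convex subgroup with
quotient `Γ'' = Γ/Γ'`, and `k` a field.  The localization of the generalized power series ring
`k[[Γ]]` at the prime ideal `p_{Γ'}` is a valuation ring of `k((Γ)) = HahnSeries Γ k`: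
concretely it consists of all Laurent series whose minimal support element lies in
`Γ_{≥0} ∪ Γ'`; it equals the set of quotients `f/g` with `f, g ∈ k[[Γ]]`, `g ∉ p_{Γ'}`;
and its value group `k((Γ))ˣ / unitGroup` is isomorphic to `Γ'' = Γ ⧸ Γ'` via the map
induced by `f ↦ f.order`. -/
theorem localization_powerSeries_valuationSubring (k : Type*) [Field k] {Γ : Type*}
    [AddCommGroup Γ] [LinearOrder Γ] [IsOrderedAddMonoid Γ] (Γ' : AddSubgroup Γ)
    (hconv : ∀ a ∈ Γ', ∀ b ∈ Γ', ∀ c : Γ, a < c → c < b → c ∈ Γ') :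
    ∃ V : ValuationSubring (HahnSeries Γ k),
      -- V consists of the Laurent series with minimal support element in Γ_{≥0} ∪ Γ'
      (∀ f : HahnSeries Γ k, f ∈ V ↔ (f = 0 ∨ 0 ≤ f.order ∨ f.order ∈ Γ')) ∧
      -- V is the localization of k[[Γ]] at p_{Γ'}
      (∀ x : HahnSeries Γ k, x ∈ V ↔
        ∃ f g : HahnSeries Γ k,
          (∀ γ ∈ f.support, 0 ≤ γ) ∧ (∀ γ ∈ g.support, 0 ≤ γ) ∧
          g ≠ 0 ∧ g.order ∈ Γ' ∧ x * g = f) ∧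
      -- the value group of V is Γ'' = Γ ⧸ Γ'
      ∃ e : ((HahnSeries Γ k)ˣ ⧸ V.unitGroup) ≃* Multiplicative (Γ ⧸ Γ'),
        ∀ u : (HahnSeries Γ k)ˣ,
          e (QuotientGroup.mk u) =
            Multiplicative.ofAdd (QuotientAddGroup.mk' Γ' (u : HahnSeries Γ k).order) := by
  classical
  -- The "nonnegative" set `S = Γ_{≥0} ∪ Γ'`.
  set S : Set Γ := {γ | 0 ≤ γ ∨ γ ∈ Γ'} with hSdef
  have hupward : ∀ a ∈ S, ∀ b : Γ, a ≤ b → b ∈ S := by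
    rintro a (h0a | hΓa) b hab
    · exact Or.inl (le_trans h0a hab)
    · rcases le_or_gt 0 b with hb | hb
      · exact Or.inl hb
      · rcases eq_or_lt_of_le hab with rfl | hab'
        · exact Or.inr hΓa
        · exact Or.inr (hconv a hΓa 0 Γ'.zero_mem b hab' hb)
  have hadd : ∀ a ∈ S, ∀ b ∈ S, a + b ∈ S := by
    rintro a (h0a | hΓa) b hb
    · rcases hb with h0b | hΓb
      · exact Or.inl (add_nonneg h0a h0b)
      · exact hupward b (Or.inr hΓb) (a + b) (le_add_of_nonneg_left h0a)
    · rcases hb with h0b | hΓb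
      · exact hupward a (Or.inr hΓa) (a + b) (le_add_of_nonneg_right h0b)
      · exact Or.inr (Γ'.add_mem hΓa hΓb)
  -- the valuation subring
  let V : ValuationSubring (HahnSeries Γ k) :=
    { carrier := {f : HahnSeries Γ k | f = 0 ∨ f.order ∈ S}
      zero_mem' := Or.inl rfl
      one_mem' := Or.inr (by rw [HahnSeries.order_one]; exact Or.inl le_rfl)
      add_mem' := by
        rintro a b ha hb
        rcases eq_or_ne a 0 with rfl | ha0; · simpa using hb
        rcases eq_or_ne b 0 with rfl | hb0; · simpa using ha
        rcases eq_or_ne (a + b) 0 with h | h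
        · exact Or.inl h
        · have ha' := ha.resolve_left ha0
          have hb' := hb.resolve_left hb0
          have hmin : min a.order b.order ∈ S := by
            rcases min_cases a.order b.order with ⟨h1, _⟩ | ⟨h1, _⟩
            · rw [h1]; exact ha'
            · rw [h1]; exact hb'
          exact Or.inr (hupward _ hmin _ (HahnSeries.min_order_le_order_add h))
      mul_mem' := by
        rintro a b ha hb
        rcases eq_or_ne a 0 with rfl | ha0; · exact Or.inl (zero_mul b)
        rcases eq_or_ne b 0 with rfl | hb0; · exact Or.inl (mul_zero a)
        have ha' := ha.resolve_left ha0
        have hb' := hb.resolve_left hb0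
        exact Or.inr (by rw [HahnSeries.order_mul ha0 hb0]; exact hadd _ ha' _ hb')
      neg_mem' := by
        rintro a ha
        rcases eq_or_ne a 0 with rfl | ha0; · exact Or.inl (neg_zero)
        exact Or.inr (by rw [HahnSeries.order_neg]; exact ha.resolve_left ha0)
      mem_or_inv_mem' := by
        intro x
        rcases eq_or_ne x 0 with rfl | hx0; · exact Or.inl (Or.inl rfl)
        by_cases hx : x.order ∈ S
        · exact Or.inl (Or.inr hx)
        · right
          have hxlt : x.order < 0 := by
            by_contra h
            exact hx (Or.inl (not_lt.mp h))
          have hxi : x⁻¹ ≠ 0 := inv_ne_zero hx0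
          have h1 : x * x⁻¹ = 1 := mul_inv_cancel₀ hx0
          have h2 := HahnSeries.order_mul (R := k) hx0 hxi
          rw [h1, HahnSeries.order_one] at h2
          have h3 : (x⁻¹).order = -x.order := eq_neg_of_add_eq_zero_right h2.symm
          refine Or.inr (Or.inl ?_)
          rw [h3]
          exact (neg_nonneg.mpr hxlt.le) }
  have hmemV : ∀ f : HahnSeries Γ k, f ∈ V ↔ (f = 0 ∨ f.order ∈ S) := fun f => Iff.rfl
  have hsupp1 : ∀ γ ∈ (1 : HahnSeries Γ k).support, (0 : Γ) ≤ γ := by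
    intro γ hγ
    rw [HahnSeries.support_one, Set.mem_singleton_iff] at hγ
    exact hγ.ge
  refine ⟨V, ?_, ?_, ?_⟩
  · -- first description
    intro f
    rw [hmemV]
    constructor
    · rintro (rfl | h | h)
      · exact Or.inl rfl
      · exact Or.inr (Or.inl h)
      · exact Or.inr (Or.inr h)
    · rintro (rfl | h | h)
      · exact Or.inl rfl
      · exact Or.inr (Or.inl h)
      · exact Or.inr (Or.inr h)
  · -- localization description
    intro x
    rw [hmemV]
    constructor
    · intro hmem
      rcases eq_or_ne x 0 with rfl | hx0
      · exact ⟨0, 1, by simp, hsupp1, one_ne_zero,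
          by rw [HahnSeries.order_one]; exact Γ'.zero_mem, by simp⟩
      have hx := hmem.resolve_left hx0
      rcases le_or_gt 0 x.order with h0 | hneg
      · refine ⟨x, 1, ?_, hsupp1, one_ne_zero,
          by rw [HahnSeries.order_one]; exact Γ'.zero_mem, mul_one x⟩
        intro γ hγ
        exact le_trans h0 (HahnSeries.order_le_of_coeff_ne_zero hγ)
      · have hΓ : x.order ∈ Γ' := hx.resolve_left (not_le.mpr hneg)
        set g : HahnSeries Γ k := HahnSeries.single (-x.order) 1 with hg
        have hg0 : g ≠ 0 := HahnSeries.single_ne_zero one_ne_zero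
        have hgord : g.order = -x.order := HahnSeries.order_single one_ne_zero
        have hxgord : (x * g).order = 0 := by
          rw [HahnSeries.order_mul hx0 hg0, hgord, add_neg_cancel]
        refine ⟨x * g, g, ?_, ?_, hg0, by rw [hgord]; exact Γ'.neg_mem hΓ, rfl⟩
        · intro γ hγ
          have := HahnSeries.order_le_of_coeff_ne_zero hγ
          rwa [hxgord] at this
        · intro γ hγ
          have h1 := HahnSeries.support_single_subset hγ
          rw [Set.mem_singleton_iff] at h1
          rw [h1]
          exact le_of_lt (neg_pos.mpr hneg)
    · rintro ⟨f, g, hf, hgsupp, hg0, hgord, hmul⟩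
      rcases eq_or_ne x 0 with rfl | hx0
      · exact Or.inl rfl
      have hf0 : f ≠ 0 := by
        rintro rfl
        exact hx0 ((mul_eq_zero.mp hmul).resolve_right hg0)
      have hford : 0 ≤ f.order := hf _ (by
        rw [HahnSeries.mem_support]
        exact fun h => hf0 (HahnSeries.coeff_order_eq_zero.mp h))
      have horder : x.order + g.order = f.order := by
        rw [← HahnSeries.order_mul hx0 hg0, hmul]
      refine Or.inr ?_
      have hxo : x.order = f.order + -g.order := by rw [← horder]; abel
      rw [hxo]
      exact hadd _ (Or.inl hford) _ (Or.inr (Γ'.neg_mem hgord))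
  · -- value group
    let φ : (HahnSeries Γ k)ˣ →* Multiplicative (Γ ⧸ Γ') :=
      { toFun := fun u =>
          Multiplicative.ofAdd (QuotientAddGroup.mk' Γ' (u : HahnSeries Γ k).order)
        map_one' := by
          simp [HahnSeries.order_one]
        map_mul' := fun u v => by
          have h := HahnSeries.order_mul (R := k) u.ne_zero v.ne_zero
          simp only [Units.val_mul, h, map_add, ofAdd_add] }
    have hker : V.unitGroup = φ.ker := by
      ext u
      rw [mem_unitGroup_iff' V u, MonoidHom.mem_ker]
      rw [hmemV, hmemV, hahn_order_inv_unit u]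
      have hne : (u : HahnSeries Γ k) ≠ 0 := u.ne_zero
      have hnei : ((u⁻¹ : (HahnSeries Γ k)ˣ) : HahnSeries Γ k) ≠ 0 :=
        (u⁻¹ : (HahnSeries Γ k)ˣ).ne_zero
      constructor
      · rintro ⟨h1, h2⟩
        have h1' := h1.resolve_left hne
        have h2' := h2.resolve_left hnei
        have horderΓ : (u : HahnSeries Γ k).order ∈ Γ' := by
          rcases h1' with h1' | h1'
          · rcases h2' with h2' | h2'
            · have h0 : (u : HahnSeries Γ k).order = 0 :=
                le_antisymm (neg_nonneg.mp h2') h1'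
              rw [h0]; exact Γ'.zero_mem
            · simpa using Γ'.neg_mem h2'
          · exact h1'
        show Multiplicative.ofAdd ((QuotientAddGroup.mk' Γ') (u : HahnSeries Γ k).order) = 1
        have : ((QuotientAddGroup.mk' Γ') (u : HahnSeries Γ k).order)
            = (0 : Γ ⧸ Γ') := (QuotientAddGroup.eq_zero_iff _).mpr horderΓ
        rw [this, ofAdd_zero]
      · intro h
        have h' : ((QuotientAddGroup.mk' Γ') (u : HahnSeries Γ k).order) = (0 : Γ ⧸ Γ') := by
          have hh : Multiplicative.ofAdd ((QuotientAddGroup.mk' Γ')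
              (u : HahnSeries Γ k).order) = Multiplicative.ofAdd (0 : Γ ⧸ Γ') := by
            rw [ofAdd_zero]; exact h
          exact Multiplicative.ofAdd.injective hh
        have horderΓ : (u : HahnSeries Γ k).order ∈ Γ' :=
          (QuotientAddGroup.eq_zero_iff _).mp h'
        exact ⟨Or.inr (Or.inr horderΓ), Or.inr (Or.inr (Γ'.neg_mem horderΓ))⟩
    have hsurj : Function.Surjective φ := by
      intro y
      obtain ⟨γ, hγ⟩ := QuotientAddGroup.mk'_surjective Γ' (Multiplicative.toAdd y)
      refine ⟨Units.mk0 (HahnSeries.single γ 1) (HahnSeries.single_ne_zero one_ne_zero), ?_⟩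
      show Multiplicative.ofAdd ((QuotientAddGroup.mk' Γ')
        (HahnSeries.single γ (1 : k)).order) = y
      rw [HahnSeries.order_single one_ne_zero, hγ]
      simp
    refine ⟨(QuotientGroup.quotientMulEquivOfEq hker).trans
      (QuotientGroup.quotientKerEquivOfSurjective φ hsurj), fun u => ?_⟩
    rfl
end

section
/- Let Γ be a totally ordered abelian group with fixed isomorphism j: Γ ≅ ℤⁿ, and let Ω¹_top(ℂ[[Γ]]/ℂ) be the quotient of ℂ[[Γ]] ⊗_ℂ ℂ[[Γ]] by the submodule generated by the elements 1⊗f − Σᵢ (∂f/∂z_i)⊗z_i. Then Ω¹_top(ℂ[[Γ]]/ℂ) is a free ℂ[[Γ]]-module of rank n with basis dz₁,…,dz_n, where dz_i is the class of 1⊗z_i. -/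
open scoped TensorProduct

noncomputable section

variable (Γ : Type*) [AddCommGroup Γ] [LinearOrder Γ] [IsOrderedAddMonoid Γ]

/-- The generalized Laurent series field `ℂ((Γ))` (Hahn series with well-ordered support). -/
abbrev LaurentField : Type _ := HahnSeries Γ ℂ

/-- `ℂ((Γ)) ⊗_ℂ ℂ((Γ))`, regarded as a module over `ℂ((Γ))` via the first tensor factor. -/
abbrev TensorSq : Type _ := LaurentField Γ ⊗[ℂ] LaurentField Γ

namespace KaehlerAux

variable {Γ} {n : ℕ} (e : Γ ≃+ (Fin n → ℤ)) (D : Fin n → LaurentField Γ → LaurentField Γ)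
  (hD : ∀ (i : Fin n) (f : LaurentField Γ) (γ : Γ),
      (D i f).coeff γ = ((e γ i + 1 : ℤ) : ℂ) * f.coeff (γ + e.symm (Pi.single i 1)))

include hD

/-- `z_i`. -/
def zvar (i : Fin n) : LaurentField Γ := HahnSeries.single (e.symm (Pi.single i 1)) (1 : ℂ)

/-- `D i` as a `ℂ`-linear map. -/
def Dlin (i : Fin n) : LaurentField Γ →ₗ[ℂ] LaurentField Γ where
  toFun := D i
  map_add' f g := by
    ext γ
    simp [hD, mul_add]
  map_smul' c f := by
    ext γ
    simp [hD]
    ring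

@[simp] lemma Dlin_apply (i : Fin n) (f : LaurentField Γ) : Dlin e D hD i f = D i f := rfl

lemma D_zvar (i j : Fin n) :
    D i (zvar e j) = if i = j then 1 else 0 := by
  ext γ
  rw [hD]
  rw [zvar, HahnSeries.coeff_single]
  by_cases h : γ + e.symm (Pi.single i 1) = e.symm (Pi.single j 1)
  · have hγ : γ = e.symm (Pi.single j 1) - e.symm (Pi.single i 1) := by
      rw [← h]; abel
    have heγ : e γ = Pi.single j 1 - Pi.single i 1 := by
      rw [hγ, map_sub, e.apply_symm_apply, e.apply_symm_apply]
    by_cases hij : i = j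
    · subst hij
      have hγ0 : γ = 0 := by
        have := h
        simpa using add_right_cancel (a := γ) (b := e.symm (Pi.single i 1)) (c := 0)
          (by simpa using h)
      simp [h, hγ0, heγ, hγ0]
    · have : e γ i = -1 := by
        rw [heγ]
        simp [Pi.single_apply, Ne.symm hij]
      simp [h, this, hij, HahnSeries.coeff_zero]
  · by_cases hij : i = j
    · subst hij
      have hγ0 : γ ≠ 0 := by
        intro h0
        exact h (by simp [h0])
      simp [h, HahnSeries.coeff_one, hγ0]
    · simp [h, hij]

/-- The map `f ⊗ g ↦ f · D i g`, `R`-linear for the left module structure. -/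
def phi (i : Fin n) : TensorSq Γ →ₗ[LaurentField Γ] LaurentField Γ :=
  TensorProduct.AlgebraTensorModule.lift
    (LinearMap.toSpanSingleton (LaurentField Γ) (LaurentField Γ →ₗ[ℂ] LaurentField Γ)
      (Dlin e D hD i))

@[simp] lemma phi_tmul (i : Fin n) (f g : LaurentField Γ) :
    phi e D hD i (f ⊗ₜ[ℂ] g) = f * D i g := by
  simp [phi, LinearMap.toSpanSingleton, smul_eq_mul]

/-- The full map `R ⊗ R → Rⁿ`. -/
def Phi : TensorSq Γ →ₗ[LaurentField Γ] (Fin n → LaurentField Γ) :=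
  LinearMap.pi (fun i => phi e D hD i)

@[simp] lemma Phi_apply (x : TensorSq Γ) (i : Fin n) :
    Phi e D hD x i = phi e D hD i x := rfl

lemma phi_gen (j : Fin n) (f : LaurentField Γ) :
    phi e D hD j (1 ⊗ₜ[ℂ] f - ∑ i : Fin n, (D i f) ⊗ₜ[ℂ] (zvar e i)) = 0 := by
  rw [map_sub, map_sum]
  simp only [phi_tmul, one_mul, D_zvar e D hD]
  rw [Finset.sum_congr rfl (fun i _ => by rw [mul_ite, mul_one, mul_zero])]
  simp

end KaehlerAux

set_option maxHeartbeats 1000000 in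
set_option synthInstance.maxHeartbeats 500000 in
/-- With a fixed isomorphism `e : Γ ≅ ℤⁿ`, `z_i = z^{e⁻¹(1_i)}`, `D i`
formal partial differentiation `∂/∂z_i`, and `M_FD ⊆ R ⊗_ℂ R` (`R = ℂ((Γ))`) the submodule
generated by the elements `1 ⊗ f − Σᵢ (∂f/∂z_i) ⊗ z_i`, the topological Kähler differentials
`Ω¹_top(ℂ((Γ))/ℂ) = (R ⊗_ℂ R)/M_FD` form a free `R`-module of rank `n` with basis
`dz₁, …, dz_n`, where `dz_i` is the class of `1 ⊗ z_i`. -/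
theorem topological_kaehler_free_of_rank_n {n : ℕ}
    (e : Γ ≃+ (Fin n → ℤ))
    (D : Fin n → LaurentField Γ → LaurentField Γ)
    (hD : ∀ (i : Fin n) (f : LaurentField Γ) (γ : Γ),
      (D i f).coeff γ = ((e γ i + 1 : ℤ) : ℂ) * f.coeff (γ + e.symm (Pi.single i 1)))
    (MFD : @Submodule (LaurentField Γ) (TensorSq Γ) _
      (@AddCommGroup.toAddCommMonoid _ inferInstance) inferInstance)
    (hMFD : MFD = Submodule.span (LaurentField Γ)
      {x | ∃ f : LaurentField Γ, x = 1 ⊗ₜ[ℂ] f -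
        ∑ i : Fin n, (D i f) ⊗ₜ[ℂ] (HahnSeries.single (e.symm (Pi.single i 1)) (1 : ℂ))}) :
    ∃ b : Module.Basis (Fin n) (LaurentField Γ) (TensorSq Γ ⧸ MFD),
      ∀ i : Fin n, b i =
        Submodule.Quotient.mk
          (1 ⊗ₜ[ℂ] (HahnSeries.single (e.symm (Pi.single i 1)) (1 : ℂ))) := by
  classical
  -- MFD is contained in the kernel of Phi
  have hker : MFD ≤ LinearMap.ker (KaehlerAux.Phi e D hD) := by
    rw [hMFD, Submodule.span_le]
    rintro x ⟨f, rfl⟩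
    simp only [SetLike.mem_coe, LinearMap.mem_ker]
    funext j
    exact KaehlerAux.phi_gen e D hD j f
  -- every tensor is congruent mod MFD to the canonical representative
  have hmem : ∀ x : TensorSq Γ,
      x - ∑ i : Fin n, (KaehlerAux.phi e D hD i x) ⊗ₜ[ℂ] (KaehlerAux.zvar e i) ∈ MFD := by
    intro x
    induction x using TensorProduct.induction_on with
    | zero =>
        simp only [map_zero, TensorProduct.zero_tmul, Finset.sum_const_zero, sub_zero]
        exact MFD.zero_mem
    | tmul f g =>
        have hgen : (1 : LaurentField Γ) ⊗ₜ[ℂ] g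
            - ∑ i : Fin n, (D i g) ⊗ₜ[ℂ] (KaehlerAux.zvar e i) ∈ MFD := by
          rw [hMFD]
          exact Submodule.subset_span ⟨g, rfl⟩
        have hsm := MFD.smul_mem f hgen
        have key : f • ((1 : LaurentField Γ) ⊗ₜ[ℂ] g
              - ∑ i : Fin n, (D i g) ⊗ₜ[ℂ] (KaehlerAux.zvar e i))
            = f ⊗ₜ[ℂ] g - ∑ i : Fin n,
                (KaehlerAux.phi e D hD i (f ⊗ₜ[ℂ] g)) ⊗ₜ[ℂ] (KaehlerAux.zvar e i) := by
          rw [smul_sub f ((1 : LaurentField Γ) ⊗ₜ[ℂ] g)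
            (∑ i : Fin n, (D i g) ⊗ₜ[ℂ] (KaehlerAux.zvar e i))]
          simp only [Finset.smul_sum, TensorProduct.smul_tmul', smul_eq_mul,
            KaehlerAux.phi_tmul, mul_one]
        rw [← key]
        exact hsm
    | add x y hx hy =>
        have hadd := MFD.add_mem hx hy
        convert hadd using 1
        simp only [map_add]
        rw [Finset.sum_congr rfl (fun i _ => TensorProduct.add_tmul _ _ _),
          Finset.sum_add_distrib]
        abel
  -- the inverse map Rⁿ → R ⊗ R, c ↦ Σ cᵢ ⊗ zᵢ
  let τ : (Fin n → LaurentField Γ) →ₗ[LaurentField Γ] TensorSq Γ :=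
    ∑ i : Fin n, (LinearMap.toSpanSingleton (LaurentField Γ) (TensorSq Γ)
      ((1 : LaurentField Γ) ⊗ₜ[ℂ] KaehlerAux.zvar e i)) ∘ₗ LinearMap.proj i
  have hτ : ∀ c : Fin n → LaurentField Γ,
      τ c = ∑ i : Fin n, (c i) ⊗ₜ[ℂ] (KaehlerAux.zvar e i) := by
    intro c
    simp only [τ, LinearMap.coe_sum, Finset.sum_apply, LinearMap.comp_apply,
      LinearMap.proj_apply, LinearMap.toSpanSingleton_apply]
    refine Finset.sum_congr rfl fun i _ => ?_
    rw [TensorProduct.smul_tmul', smul_eq_mul, mul_one]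
  have hPhiτ : ∀ (c : Fin n → LaurentField Γ),
      KaehlerAux.Phi e D hD (τ c) = c := by
    intro c
    funext j
    rw [hτ]
    show KaehlerAux.phi e D hD j _ = c j
    rw [map_sum]
    simp only [KaehlerAux.phi_tmul, KaehlerAux.D_zvar e D hD, mul_ite, mul_one, mul_zero]
    simp
  have h1 : (MFD.liftQ (KaehlerAux.Phi e D hD) hker) ∘ₗ (MFD.mkQ ∘ₗ τ) = LinearMap.id := by
    refine LinearMap.ext fun c => ?_
    simp only [LinearMap.comp_apply, Submodule.mkQ_apply, Submodule.liftQ_apply,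
      LinearMap.id_apply]
    exact hPhiτ c
  have h2 : (MFD.mkQ ∘ₗ τ) ∘ₗ (MFD.liftQ (KaehlerAux.Phi e D hD) hker) = LinearMap.id := by
    refine Submodule.linearMap_qext _ ?_
    refine LinearMap.ext fun x => ?_
    simp only [LinearMap.comp_apply, Submodule.mkQ_apply, Submodule.liftQ_apply,
      LinearMap.id_apply]
    rw [hτ, eq_comm, Submodule.Quotient.eq]
    exact hmem x
  let equiv : (TensorSq Γ ⧸ MFD) ≃ₗ[LaurentField Γ] (Fin n → LaurentField Γ) :=
    LinearEquiv.ofLinear (MFD.liftQ (KaehlerAux.Phi e D hD) hker) (MFD.mkQ ∘ₗ τ) h1 h2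
  refine ⟨(Pi.basisFun (LaurentField Γ) (Fin n)).map equiv.symm, fun i => ?_⟩
  rw [Module.Basis.map_apply]
  simp only [equiv, LinearEquiv.ofLinear_symm_apply, LinearMap.comp_apply,
    Submodule.mkQ_apply]
  rw [hτ]
  have hb : ((Pi.basisFun (LaurentField Γ) (Fin n)) i : Fin n → LaurentField Γ)
      = Pi.single i 1 := by
    ext j
    simp [Pi.basisFun_apply, Pi.single_apply]
  rw [hb]
  have hsum : (∑ j : Fin n, (Pi.single i (1 : LaurentField Γ) j) ⊗ₜ[ℂ] (KaehlerAux.zvar e j))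
      = (1 : LaurentField Γ) ⊗ₜ[ℂ] KaehlerAux.zvar e i := by
    rw [Finset.sum_eq_single i]
    · rw [Pi.single_eq_same]
    · intro j _ hj
      rw [Pi.single_eq_of_ne hj, TensorProduct.zero_tmul]
    · intro h
      exact absurd (Finset.mem_univ i) h
  rw [hsum]
  rfl

end
end
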